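/- Let G be a group with lower central series γ_0(G) = G, γ_{k+1}(G) = ⁅G, γ_k(G)⁆. For all natural numbers a, b, c and all x ∈ γ_a(G), y ∈ γ_b(G), z ∈ γ_c(G), the product ⁅⁅x, y⁆, z⁆ * ⁅⁅y, z⁆, x⁆ * ⁅⁅z, x⁆, y⁆ lies in γ_{a+b+c+3}(G). In other words, the bracket induced by the group commutator on the graded abelian group ⊕_n γ_n(G)/γ_{n+1}(G) satisfies the Jacobi identity, making it a Lie ring. -/

import Mathlib

/-- The commutator `⁅x, y⁆ = x⁻¹y⁻¹xy`. -/
def commE {G : Type*} [Group G] (x y : G) : G := x⁻¹ * y⁻¹ * x * y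

open Subgroup
open scoped commutatorElement

lemma commE_eq_commutator {G : Type*} [Group G] (x y : G) : commE x y = ⁅x⁻¹, y⁻¹⁆ := by
  simp [commE, commutatorElement_def, mul_assoc]

/-- Three subgroups lemma relative to a normal subgroup. -/
lemma three_subgroups_le {G : Type*} [Group G] {A B C N : Subgroup G} [N.Normal]
    (h1 : ⁅⁅B, C⁆, A⁆ ≤ N) (h2 : ⁅⁅C, A⁆, B⁆ ≤ N) : ⁅⁅A, B⁆, C⁆ ≤ N := by
  let π := QuotientGroup.mk' N
  have hker : π.ker = N := QuotientGroup.ker_mk' N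
  have lift : ∀ X Y Z : Subgroup G, ⁅⁅X, Y⁆, Z⁆ ≤ N →
      ⁅⁅Subgroup.map π X, Subgroup.map π Y⁆, Subgroup.map π Z⁆ = ⊥ := by
    intro X Y Z h
    rw [← Subgroup.map_commutator, ← Subgroup.map_commutator, Subgroup.map_eq_bot_iff, hker]
    exact h
  have key := Subgroup.commutator_commutator_eq_bot_of_rotate (lift B C A h1) (lift C A B h2)
  rw [← Subgroup.map_commutator, ← Subgroup.map_commutator, Subgroup.map_eq_bot_iff, hker] at key
  exact key

/-- `⁅γ_i(G), γ_j(G)⁆ ≤ γ_{i+j+1}(G)`. -/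
lemma lcs_comm {G : Type*} [Group G] :
    ∀ i j : ℕ, ⁅Subgroup.lowerCentralSeries (⊤ : Subgroup G) i, Subgroup.lowerCentralSeries (⊤ : Subgroup G) j⁆ ≤
      Subgroup.lowerCentralSeries (⊤ : Subgroup G) (i + j + 1) := by
  intro i
  induction i with
  | zero =>
    intro j
    rw [Subgroup.lowerCentralSeries_zero, commutator_comm]
    have h0 : (0 : ℕ) + j + 1 = j + 1 := by omega
    rw [h0]
    exact le_of_eq rfl
  | succ i ih =>
    intro j
    have hA : Subgroup.lowerCentralSeries (⊤ : Subgroup G) (i + 1) = ⁅Subgroup.lowerCentralSeries (⊤ : Subgroup G) i, ⊤⁆ := rfl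
    rw [hA]
    refine three_subgroups_le ?_ ?_
    · -- ⁅⁅⊤, γ_j⁆, γ_i⁆ ≤ γ_{i+1+j+1}
      rw [commutator_comm (⊤ : Subgroup G)]
      have h1 : ⁅Subgroup.lowerCentralSeries (⊤ : Subgroup G) j, (⊤ : Subgroup G)⁆ = Subgroup.lowerCentralSeries (⊤ : Subgroup G) (j + 1) := rfl
      rw [h1, commutator_comm]
      have := ih (j + 1)
      have he : i + (j + 1) + 1 = i + 1 + j + 1 := by omega
      rwa [he] at this
    ·
      have h1 : ⁅Subgroup.lowerCentralSeries (⊤ : Subgroup G) j, Subgroup.lowerCentralSeries (⊤ : Subgroup G) i⁆ ≤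
          Subgroup.lowerCentralSeries (⊤ : Subgroup G) (i + j + 1) := by
        rw [commutator_comm]; exact ih j
      have h2 : ⁅Subgroup.lowerCentralSeries (⊤ : Subgroup G) (i + j + 1), (⊤ : Subgroup G)⁆ =
          Subgroup.lowerCentralSeries (⊤ : Subgroup G) (i + j + 1 + 1) := rfl
      calc ⁅⁅Subgroup.lowerCentralSeries (⊤ : Subgroup G) j, Subgroup.lowerCentralSeries (⊤ : Subgroup G) i⁆, (⊤ : Subgroup G)⁆
          ≤ ⁅Subgroup.lowerCentralSeries (⊤ : Subgroup G) (i + j + 1), (⊤ : Subgroup G)⁆ :=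
            Subgroup.commutator_mono h1 le_rfl
        _ = Subgroup.lowerCentralSeries (⊤ : Subgroup G) (i + 1 + j + 1) := by rw [h2]; congr 1; omega

/-- Surjective homomorphisms map the lower central series onto the lower central series. -/
lemma lcs_map_surjective {G H : Type*} [Group G] [Group H] (f : G →* H)
    (hf : Function.Surjective f) (n : ℕ) :
    Subgroup.map f (Subgroup.lowerCentralSeries (⊤ : Subgroup G) n) = Subgroup.lowerCentralSeries (⊤ : Subgroup H) n := by
  induction n with
  | zero => simpa using Subgroup.map_top_of_surjective f hf
  | succ n ih =>
    show Subgroup.map f ⁅Subgroup.lowerCentralSeries (⊤ : Subgroup G) n, ⊤⁆ = ⁅Subgroup.lowerCentralSeries (⊤ : Subgroup H) n, ⊤⁆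
    rw [Subgroup.map_commutator, ih, Subgroup.map_top_of_surjective f hf]

/-- One factor of the Hall–Witt identity, rewritten using centrality. -/
lemma term_eq {H : Type*} [Group H] (x y z : H)
    (h1 : ∀ g, Commute (commE (commE x y) z) g)
    (h2 : ∀ g, Commute (commE (commE x y)⁻¹ z) g)
    (h3 : commE (commE (commE x y)⁻¹ y⁻¹) z = 1) :
    commE (commE x y⁻¹) z = (commE (commE x y) z)⁻¹ := by
  have e1 : commE x y⁻¹ = (commE x y)⁻¹ * commE (commE x y)⁻¹ y⁻¹ := by
    unfold commE; group
  have e2 : commE ((commE x y)⁻¹ * commE (commE x y)⁻¹ y⁻¹) z =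
      (commE (commE x y)⁻¹ y⁻¹)⁻¹ * (commE (commE x y)⁻¹ z * commE (commE x y)⁻¹ y⁻¹) *
        commE (commE (commE x y)⁻¹ y⁻¹) z := by
    unfold commE; group
  have e3 : (commE (commE x y)⁻¹ y⁻¹)⁻¹ * (commE (commE x y)⁻¹ z * commE (commE x y)⁻¹ y⁻¹) =
      commE (commE x y)⁻¹ z := by
    rw [(h2 (commE (commE x y)⁻¹ y⁻¹)).eq]; group
  have e4 : commE (commE x y)⁻¹ z = commE x y * (commE (commE x y) z)⁻¹ * (commE x y)⁻¹ := by
    unfold commE; group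
  have e5 : commE x y * (commE (commE x y) z)⁻¹ * (commE x y)⁻¹ = (commE (commE x y) z)⁻¹ := by
    rw [← ((h1 (commE x y)).inv_left).eq]; group
  rw [e1, e2, h3, mul_one, e3, e4, e5]

/-- Jacobi identity when the relevant term of the lower central series is trivial. -/
lemma jacobi_aux {H : Type*} [Group H] (a b c : ℕ) (x y z : H)
    (hx : x ∈ Subgroup.lowerCentralSeries (⊤ : Subgroup H) a) (hy : y ∈ Subgroup.lowerCentralSeries (⊤ : Subgroup H) b)
    (hz : z ∈ Subgroup.lowerCentralSeries (⊤ : Subgroup H) c)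
    (hbot : Subgroup.lowerCentralSeries (⊤ : Subgroup H) (a + b + c + 3) = ⊥) :
    commE (commE x y) z * commE (commE y z) x * commE (commE z x) y = 1 := by
  have htriv : ∀ {k : ℕ}, a + b + c + 3 ≤ k → ∀ g ∈ Subgroup.lowerCentralSeries (⊤ : Subgroup H) k, g = 1 := by
    intro k hk g hg
    have h := Subgroup.lowerCentralSeries_antitone ⊤ hk hg
    rw [hbot] at h
    exact Subgroup.mem_bot.mp h
  have hcomm : ∀ {i j : ℕ} (u v : H), u ∈ Subgroup.lowerCentralSeries (⊤ : Subgroup H) i →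
      v ∈ Subgroup.lowerCentralSeries (⊤ : Subgroup H) j → commE u v ∈ Subgroup.lowerCentralSeries (⊤ : Subgroup H) (i + j + 1) := by
    intro i j u v hu hv
    rw [commE_eq_commutator]
    exact lcs_comm i j (Subgroup.commutator_mem_commutator (inv_mem hu) (inv_mem hv))
  have hcent : ∀ {k : ℕ}, a + b + c + 2 ≤ k → ∀ g ∈ Subgroup.lowerCentralSeries (⊤ : Subgroup H) k,
      ∀ w : H, Commute g w := by
    intro k hk g hg w
    rw [← commutatorElement_eq_one_iff_commute]
    refine htriv (k := k + 1) (by omega) _ ?_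
    exact Subgroup.commutator_mem_commutator hg (Subgroup.mem_top w)
  -- memberships
  have hx' : x⁻¹ ∈ Subgroup.lowerCentralSeries (⊤ : Subgroup H) a := inv_mem hx
  have hy' : y⁻¹ ∈ Subgroup.lowerCentralSeries (⊤ : Subgroup H) b := inv_mem hy
  have hz' : z⁻¹ ∈ Subgroup.lowerCentralSeries (⊤ : Subgroup H) c := inv_mem hz
  -- the three rewritten factors
  have key : ∀ {i j k : ℕ} (p q r : H), i + j + k = a + b + c →
      p ∈ Subgroup.lowerCentralSeries (⊤ : Subgroup H) i → q ∈ Subgroup.lowerCentralSeries (⊤ : Subgroup H) j →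
      r ∈ Subgroup.lowerCentralSeries (⊤ : Subgroup H) k →
      commE (commE p q⁻¹) r = (commE (commE p q) r)⁻¹ := by
    intro i j k p q r hijk hp hq hr
    have hpq : commE p q ∈ Subgroup.lowerCentralSeries (⊤ : Subgroup H) (i + j + 1) := hcomm p q hp hq
    have hpq' : (commE p q)⁻¹ ∈ Subgroup.lowerCentralSeries (⊤ : Subgroup H) (i + j + 1) := inv_mem hpq
    refine term_eq p q r ?_ ?_ ?_
    · exact fun g => hcent (by omega) _ (hcomm _ _ hpq hr) g
    · exact fun g => hcent (by omega) _ (hcomm _ _ hpq' hr) g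
    · have hq0 : q⁻¹ ∈ Subgroup.lowerCentralSeries (⊤ : Subgroup H) 0 := Subgroup.mem_top _
      have hd : commE (commE p q)⁻¹ q⁻¹ ∈ Subgroup.lowerCentralSeries (⊤ : Subgroup H) (i + j + 1 + 0 + 1) :=
        hcomm (i := i + j + 1) (j := 0) _ _ hpq' hq0
      have hfin : commE (commE (commE p q)⁻¹ q⁻¹) r ∈
          Subgroup.lowerCentralSeries (⊤ : Subgroup H) (i + j + 1 + 0 + 1 + k + 1) :=
        hcomm (i := i + j + 1 + 0 + 1) (j := k) _ _ hd hr
      exact htriv (by omega) _ hfin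
  have k1 := key x y z (by omega) hx hy hz
  have k2 := key y z x (by omega) hy hz hx
  have k3 := key z x y (by omega) hz hx hy
  -- Hall–Witt identity
  have hw : (y⁻¹ * commE (commE x y⁻¹) z * y) * (z⁻¹ * commE (commE y z⁻¹) x * z) *
      (x⁻¹ * commE (commE z x⁻¹) y * x) = 1 := by
    unfold commE; group
  -- the conjugated factors are central, so conjugation disappears
  have c1 : ∀ g, Commute (commE (commE x y⁻¹) z) g :=
    fun g => hcent (by omega) _ (hcomm _ _ (hcomm x y⁻¹ hx hy') hz) g
  have c2 : ∀ g, Commute (commE (commE y z⁻¹) x) g :=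
    fun g => hcent (by omega) _ (hcomm _ _ (hcomm y z⁻¹ hy hz') hx) g
  have c3 : ∀ g, Commute (commE (commE z x⁻¹) y) g :=
    fun g => hcent (by omega) _ (hcomm _ _ (hcomm z x⁻¹ hz hx') hy) g
  have e1 : y⁻¹ * commE (commE x y⁻¹) z * y = commE (commE x y⁻¹) z := by
    rw [mul_assoc, (c1 y).eq]; group
  have e2 : z⁻¹ * commE (commE y z⁻¹) x * z = commE (commE y z⁻¹) x := by
    rw [mul_assoc, (c2 z).eq]; group
  have e3 : x⁻¹ * commE (commE z x⁻¹) y * x = commE (commE z x⁻¹) y := by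
    rw [mul_assoc, (c3 x).eq]; group
  rw [e1, e2, e3, k1, k2, k3] at hw
  -- from Q1⁻¹ Q2⁻¹ Q3⁻¹ = 1 deduce Q1 Q2 Q3 = 1 using commutativity
  set Q1 := commE (commE x y) z with hQ1
  set Q2 := commE (commE y z) x with hQ2
  set Q3 := commE (commE z x) y with hQ3
  have cQ1 : ∀ g, Commute Q1 g := fun g => hcent (by omega) _ (hcomm _ _ (hcomm x y hx hy) hz) g
  have cQ2 : ∀ g, Commute Q2 g := fun g => hcent (by omega) _ (hcomm _ _ (hcomm y z hy hz) hx) g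
  have h321 : Q3 * (Q2 * Q1) = 1 := by
    have h := congrArg (·⁻¹) hw
    simpa [mul_inv_rev, mul_assoc] using h
  calc Q1 * Q2 * Q3 = Q3 * (Q2 * Q1) := by
        rw [mul_assoc, (cQ2 Q3).eq, (cQ1 (Q3 * Q2)).eq, mul_assoc]
    _ = 1 := h321

/-- Jacobi identity for the graded Lie ring of the lower central series: if
`x ∈ γ_a(G)`, `y ∈ γ_b(G)`, `z ∈ γ_c(G)`, then
`⁅⁅x,y⁆,z⁆ * ⁅⁅y,z⁆,x⁆ * ⁅⁅z,x⁆,y⁆ ∈ γ_{a+b+c+3}(G)`. -/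
theorem graded_jacobi_identity {G : Type*} [Group G] (a b c : ℕ) (x y z : G)
    (hx : x ∈ Subgroup.lowerCentralSeries (⊤ : Subgroup G) a) (hy : y ∈ Subgroup.lowerCentralSeries (⊤ : Subgroup G) b)
    (hz : z ∈ Subgroup.lowerCentralSeries (⊤ : Subgroup G) c) :
    commE (commE x y) z * commE (commE y z) x * commE (commE z x) y ∈
      Subgroup.lowerCentralSeries (⊤ : Subgroup G) (a + b + c + 3) := by
  let N := Subgroup.lowerCentralSeries (⊤ : Subgroup G) (a + b + c + 3)
  let π := QuotientGroup.mk' N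
  have hsurj : Function.Surjective π := QuotientGroup.mk'_surjective N
  have hbot : Subgroup.lowerCentralSeries (⊤ : Subgroup (G ⧸ N)) (a + b + c + 3) = ⊥ := by
    rw [← lcs_map_surjective π hsurj, Subgroup.map_eq_bot_iff, QuotientGroup.ker_mk']
  have hmem : ∀ (k : ℕ) (g : G), g ∈ Subgroup.lowerCentralSeries (⊤ : Subgroup G) k →
      π g ∈ Subgroup.lowerCentralSeries (⊤ : Subgroup (G ⧸ N)) k := by
    intro k g hg
    rw [← lcs_map_surjective π hsurj k]; exact ⟨g, hg, rfl⟩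
  have key := jacobi_aux a b c (π x) (π y) (π z) (hmem a x hx) (hmem b y hy) (hmem c z hz) hbot
  have hπ : ∀ u v : G, π (commE u v) = commE (π u) (π v) := fun u v => by
    simp [commE]
  have hone : π (commE (commE x y) z * commE (commE y z) x * commE (commE z x) y) = 1 := by
    rw [map_mul, map_mul, hπ, hπ, hπ, hπ, hπ, hπ]
    exact key
  exact (QuotientGroup.eq_one_iff _).mp hone
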